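/- Let $a_2 \neq 0$ and $a_1 \neq 0$ be fixed reals, and fix $b_2 \neq 0$. For $b_1 \in \mathbb{R}$, define $h_n(b_1) = \frac{a_1 a_2 + n b_1 b_2}{a_1^2 + n b_1^2}$ and $L_n(b_1) = (b_1 h_n(b_1) - b_2)^2$. Then $\lim_{b_1 \to 0} \big[ (n+1) L_n(b_1) - n L_{n-1}(b_1) \big] = b_2^2 > 0$. Consequently, for every $n \geq 1$ there exists $b_1 > 0$ with $(n+1) L_n(b_1) - n L_{n-1}(b_1) > 0$. -/
import Mathlib


/-- With `h m b1 = (a1 a2 + m b1 b2)/(a1² + m b1²)` (the no-intercept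
least-squares fit of one point `(a1,a2)` and `m` copies of `(b1,b2)`) and
`L m b1 = (b1 · h m b1 - b2)²`, we have
`lim_{b1 → 0⁺} [(n+1) L n b1 - n L (n-1) b1] = b2² > 0`; consequently, for every `n ≥ 1`
there exists `b1 > 0` with `(n+1) L n b1 - n L (n-1) b1 > 0`. -/
theorem stmt_6 (a1 a2 b2 : ℝ) (ha1 : a1 ≠ 0) (ha2 : a2 ≠ 0) (hb2 : b2 ≠ 0)
    (n : ℕ) (hn : 1 ≤ n)
    (h : ℕ → ℝ → ℝ)
    (hh : ∀ (m : ℕ) (b1 : ℝ), h m b1 = (a1 * a2 + m * b1 * b2) / (a1 ^ 2 + m * b1 ^ 2))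
    (L : ℕ → ℝ → ℝ)
    (hL : ∀ (m : ℕ) (b1 : ℝ), L m b1 = (b1 * h m b1 - b2) ^ 2) :
    Filter.Tendsto (fun b1 : ℝ => (n + 1 : ℝ) * L n b1 - (n : ℝ) * L (n - 1) b1)
        (nhdsWithin 0 (Set.Ioi 0)) (nhds (b2 ^ 2)) ∧
    0 < b2 ^ 2 ∧
    ∃ b1 : ℝ, 0 < b1 ∧ 0 < (n + 1 : ℝ) * L n b1 - (n : ℝ) * L (n - 1) b1 := by
  have hLcont : ∀ m : ℕ, ContinuousAt (fun b1 => L m b1) 0 := by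
    intro m
    have hfun : (fun b1 => L m b1) =
        fun b1 => (b1 * ((a1 * a2 + m * b1 * b2) / (a1 ^ 2 + m * b1 ^ 2)) - b2) ^ 2 := by
      funext b1; rw [hL, hh]
    rw [hfun]
    apply ContinuousAt.pow
    apply ContinuousAt.sub _ continuousAt_const
    apply ContinuousAt.mul continuousAt_id
    apply ContinuousAt.div (by fun_prop) (by fun_prop)
    positivity
  have hL0 : ∀ m : ℕ, L m 0 = b2 ^ 2 := by
    intro m; rw [hL]; ring_nf
  have hcont : ContinuousAt (fun b1 : ℝ => (n + 1 : ℝ) * L n b1 - (n : ℝ) * L (n - 1) b1) 0 := by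
    exact ((continuousAt_const.mul (hLcont n)).sub (continuousAt_const.mul (hLcont (n-1))))
  have hval : (n + 1 : ℝ) * L n 0 - (n : ℝ) * L (n - 1) 0 = b2 ^ 2 := by
    rw [hL0, hL0]; ring
  have htend : Filter.Tendsto (fun b1 : ℝ => (n + 1 : ℝ) * L n b1 - (n : ℝ) * L (n - 1) b1)
      (nhdsWithin 0 (Set.Ioi 0)) (nhds (b2 ^ 2)) := by
    rw [← hval]
    exact hcont.continuousWithinAt.tendsto
  have hpos : 0 < b2 ^ 2 := by positivity
  refine ⟨htend, by positivity, ?_⟩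
  have hev : ∀ᶠ b1 in nhdsWithin (0:ℝ) (Set.Ioi 0),
      0 < (n + 1 : ℝ) * L n b1 - (n : ℝ) * L (n - 1) b1 :=
    htend.eventually (eventually_gt_nhds (by positivity))
  have hne : (nhdsWithin (0:ℝ) (Set.Ioi 0)).NeBot := by
    exact nhdsGT_neBot 0
  obtain ⟨b1, hb1⟩ := (hev.and (eventually_mem_nhdsWithin)).exists
  exact ⟨b1, hb1.2, hb1.1⟩
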